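/- If a = (a_1,...,a_n) is a p-ascent sequence that avoids the pattern 012, then a_i ≤ p for all i. -/

import Mathlib

/-- Number of ascents of a sequence: indices j with a_j < a_{j+1}. -/
def ascN (l : List ℕ) : ℕ := (l.zip l.tail).countP (fun q => decide (q.1 < q.2))

/-- `a` is a p-ascent sequence: nonempty, starts with 0, and each later entry
is at most `p` plus the number of ascents of the preceding prefix. -/
def IsPAsc (p : ℕ) (a : List ℕ) : Prop :=
  a.head? = some 0 ∧ ∀ i : Fin a.length, 1 ≤ i.val → a.get i ≤ p + ascN (a.take i.val)

def Avoids01 (a : List ℕ) : Prop := ∀ i j : Fin a.length, i < j → ¬ a.get i < a.get j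

def Avoids10 (a : List ℕ) : Prop := ∀ i j : Fin a.length, i < j → ¬ a.get j < a.get i

def Avoids012 (a : List ℕ) : Prop :=
  ∀ i j k : Fin a.length, i < j → j < k → ¬ (a.get i < a.get j ∧ a.get j < a.get k)

/-- primitive: no two equal consecutive letters -/
def Primitive (a : List ℕ) : Prop := a.Chain' (· ≠ ·)

lemma ascN_pos_exists (l : List ℕ) (hl : 0 < ascN l) :
    ∃ j, ∃ h : j + 1 < l.length, l[j] < l[j+1] := by
  rw [ascN, List.countP_pos_iff] at hl
  obtain ⟨q, hq, hlt⟩ := hl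
  obtain ⟨j, hj, hget⟩ := List.getElem_of_mem hq
  have hlen : (l.zip l.tail).length = min l.length l.tail.length := List.length_zip
  have hjl : j < l.length := lt_of_lt_of_le hj (by rw [hlen]; exact min_le_left _ _)
  have hjt : j < l.tail.length := lt_of_lt_of_le hj (by rw [hlen]; exact min_le_right _ _)
  have hj1 : j + 1 < l.length := by
    have := l.length_tail
    omega
  refine ⟨j, hj1, ?_⟩
  have hz : (l.zip l.tail)[j] = (l[j], l.tail[j]) := List.getElem_zip
  rw [hget] at hz
  have ht : l.tail[j] = l[j+1] := List.getElem_tail hjt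
  simp only [decide_eq_true_eq] at hlt
  rw [hz, ht] at hlt
  exact hlt

theorem stmt9 (p : ℕ) (hp : 1 ≤ p) (a : List ℕ) (h : IsPAsc p a) (hav : Avoids012 a) :
    ∀ i : Fin a.length, a.get i ≤ p := by
  obtain ⟨h0, hstep⟩ := h
  suffices H : ∀ n, ∀ hn : n < a.length, a.get ⟨n, hn⟩ ≤ p by
    intro i; exact H i.val i.isLt
  intro n
  induction n using Nat.strong_induction_on with
  | _ n IH =>
    intro hn
    rcases Nat.eq_zero_or_pos n with h0' | hpos
    · subst h0'
      have : a.get ⟨0, hn⟩ = 0 := by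
        cases a with
        | nil => simp at hn
        | cons x xs => simp_all
      omega
    · by_contra hgt
      push_neg at hgt
      have hb := hstep ⟨n, hn⟩ hpos
      simp only at hb
      have hasc : 0 < ascN (a.take n) := by omega
      obtain ⟨j, hj1, hlt⟩ := ascN_pos_exists _ hasc
      have htl : (a.take n).length = n := by
        rw [List.length_take]; exact min_eq_left (le_of_lt hn)
      rw [htl] at hj1
      have hja : j < a.length := by omega
      have hj1a : j + 1 < a.length := by omega
      rw [List.getElem_take, List.getElem_take] at hlt
      have hIH : a.get ⟨j+1, hj1a⟩ ≤ p := IH (j+1) hj1 hj1a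
      apply hav ⟨j, hja⟩ ⟨j+1, hj1a⟩ ⟨n, hn⟩ (by simp) hj1
      exact ⟨by simpa using hlt, lt_of_le_of_lt hIH hgt⟩
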